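/- arXiv:1401.6024 — 7 statements merged into one kernel-verified Lean document; each statement's English description precedes it below -/
import Mathlib

section
/- Let D be an m×n real matrix whose column space of centered columns has dimension r−1 (i.e., the affine hull of the columns of D has affine dimension r−1). Then the affine hull of the columns of D contains at most 2^{r−1} vertices of the hypercube [0,1]^m, i.e., |aff(D) ∩ {0,1}^m| ≤ 2^{r−1}. -/
open Matrix

theorem affine_hull_at_most_two_pow_vertices
    (m n r : ℕ) (hr : 1 ≤ r) (D : Matrix (Fin m) (Fin n) ℝ)
    (p : Fin m → ℝ)
    (hp : ∃ θ : Fin n → ℝ, ∑ j, θ j = 1 ∧ D.mulVec θ = p)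
    (hrank : (Matrix.of (fun i j => D i j - p i)).rank = r - 1) :
    {x : Fin m → ℝ | (∃ θ : Fin n → ℝ, ∑ j, θ j = 1 ∧ D.mulVec θ = x) ∧
      ∀ i, x i = 0 ∨ x i = 1}.ncard ≤ 2 ^ (r - 1) := by
  classical
  set P : Matrix (Fin m) (Fin n) ℝ := Matrix.of (fun i j => D i j - p i) with hP
  set W : Submodule ℝ (Fin m → ℝ) := LinearMap.range P.mulVecLin with hW
  set S : Set (Fin m → ℝ) := {x : Fin m → ℝ |
      (∃ θ : Fin n → ℝ, ∑ j, θ j = 1 ∧ D.mulVec θ = x) ∧ ∀ i, x i = 0 ∨ x i = 1} with hS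
  have hfinW : Module.finrank ℝ W = r - 1 := hrank
  -- every x ∈ S has x - p ∈ W
  have hmem : ∀ x ∈ S, x - p ∈ W := by
    rintro x ⟨⟨θ, hθ1, hθ2⟩, -⟩
    refine ⟨θ, ?_⟩
    funext i
    have : ∑ j, (D i j - p i) * θ j = (∑ j, D i j * θ j) - p i := by
      simp_rw [sub_mul]
      rw [Finset.sum_sub_distrib, ← Finset.mul_sum, hθ1, mul_one]
    simpa [Matrix.mulVecLin, Matrix.mulVec, dotProduct, hP, ← hθ2] using this
  -- coordinate functionals on W
  set f : Fin m → Module.Dual ℝ W := fun i => (LinearMap.proj i).comp W.subtype with hf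
  obtain ⟨t, hts, htsp, hti⟩ := exists_linearIndependent ℝ (Set.range f)
  have htfin : t.Finite := hti.setFinite
  haveI : Fintype t := htfin.fintype
  have htcard : Fintype.card t ≤ r - 1 := by
    have := hti.fintype_card_le_finrank
    rwa [Subspace.dual_finrank_eq, hfinW] at this
  -- index choice
  have hidx : ∀ φ : t, ∃ i, f i = (φ : Module.Dual ℝ W) := fun φ => hts φ.2
  set idx : t → Fin m := fun φ => (hidx φ).choose with hidxdef
  have hidxspec : ∀ φ : t, f (idx φ) = (φ : Module.Dual ℝ W) := fun φ => (hidx φ).choose_spec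
  -- injection into t → Bool
  set Ψ : S → (t → Bool) := fun x φ => decide ((x : Fin m → ℝ) (idx φ) = 1) with hΨ
  have hinj : Function.Injective Ψ := by
    intro x y hxy
    have hx01 := x.2.2
    have hy01 := y.2.2
    have hcoord : ∀ φ : t, (x : Fin m → ℝ) (idx φ) = (y : Fin m → ℝ) (idx φ) := by
      intro φ
      have h := congrFun hxy φ
      simp only [hΨ] at h
      rcases hx01 (idx φ) with h1 | h1 <;> rcases hy01 (idx φ) with h2 | h2 <;>
        simp [h1, h2] at h ⊢
    -- w := (x - p) - (y - p) ∈ W, killed by all φ ∈ t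
    set wx : W := ⟨(x : Fin m → ℝ) - p, hmem x x.2⟩
    set wy : W := ⟨(y : Fin m → ℝ) - p, hmem y y.2⟩
    have hker : Submodule.span ℝ t ≤ LinearMap.ker (Module.Dual.eval ℝ W (wx - wy)) := by
      rw [Submodule.span_le]
      intro φ hφ
      have := hcoord ⟨φ, hφ⟩
      have hspec : f (idx ⟨φ, hφ⟩) = φ := hidxspec ⟨φ, hφ⟩
      simp only [SetLike.mem_coe, LinearMap.mem_ker, Module.Dual.eval_apply, map_sub,
        LinearMap.sub_apply]
      rw [← hspec]
      simp only [hf, LinearMap.comp_apply, LinearMap.proj_apply, Submodule.subtype_apply]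
      simp only [wx, wy, Pi.sub_apply]
      rw [this]
      ring
    have hall : ∀ j, (x : Fin m → ℝ) j = (y : Fin m → ℝ) j := by
      intro j
      have hfj : f j ∈ Submodule.span ℝ t := by
        rw [htsp]
        exact Submodule.subset_span ⟨j, rfl⟩
      have := hker hfj
      simp only [LinearMap.mem_ker, Module.Dual.eval_apply, map_sub, LinearMap.sub_apply, hf,
        LinearMap.comp_apply, LinearMap.proj_apply, Submodule.subtype_apply] at this
      have : ((x : Fin m → ℝ) j - p j) - ((y : Fin m → ℝ) j - p j) = 0 := by
        simpa [wx, wy] using this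
      linarith
    exact Subtype.ext (funext hall)
  haveI : Finite S := Finite.of_injective Ψ hinj
  have h1 : S.ncard = Nat.card S := (Nat.card_coe_set_eq S).symm
  have h2 : Nat.card S ≤ Nat.card (t → Bool) := Nat.card_le_card_of_injective Ψ hinj
  have h3 : Nat.card (t → Bool) = 2 ^ Fintype.card t := by
    simp [Nat.card_eq_fintype_card]
  calc S.ncard = Nat.card S := h1
    _ ≤ Nat.card (t → Bool) := h2
    _ = 2 ^ Fintype.card t := h3
    _ ≤ 2 ^ (r - 1) := Nat.pow_le_pow_right (by norm_num) htcard
end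

section
/- (Discrete Littlewood–Offord) Let a₁, ..., a_ℓ be nonzero real numbers and y ∈ ℝ. Then the number of vectors b ∈ {0,1}^ℓ with Σᵢ aᵢbᵢ = y is at most C(ℓ, ⌊ℓ/2⌋). -/
open Finset

theorem discrete_littlewood_offord
    (ℓ : ℕ) (a : Fin ℓ → ℝ) (ha : ∀ i, a i ≠ 0) (y : ℝ) :
    {b : Fin ℓ → Bool | ∑ i, a i * (if b i then 1 else 0) = y}.ncard ≤
      Nat.choose ℓ (ℓ / 2) := by
  classical
  set c : ℝ := ∑ i, if a i < 0 then a i else 0 with hc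
  set g : (Fin ℓ → Bool) → Finset (Fin ℓ) :=
    fun b => univ.filter (fun i => b i ≠ decide (a i < 0)) with hg
  have hginj : Function.Injective g := by
    intro b b' h
    funext i
    have h1 : (i ∈ g b) ↔ (i ∈ g b') := by rw [h]
    simp only [hg, mem_filter, mem_univ, true_and] at h1
    rcases Bool.eq_false_or_eq_true (decide (a i < 0)) with hd | hd <;>
      rcases Bool.eq_false_or_eq_true (b i) with h2 | h2 <;>
      rcases Bool.eq_false_or_eq_true (b' i) with h3 | h3 <;>
      simp [hd, h2, h3] at h1 ⊢
  have hsum : ∀ b : Fin ℓ → Bool,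
      ∑ i, a i * (if b i then 1 else 0) = (∑ i ∈ g b, |a i|) + c := by
    intro b
    rw [hc, hg, Finset.sum_filter, ← Finset.sum_add_distrib]
    refine Finset.sum_congr rfl fun i _ => ?_
    rcases lt_or_ge (a i) 0 with hneg | hpos
    · rcases Bool.eq_false_or_eq_true (b i) with h2 | h2 <;>
        simp [h2, hneg, abs_of_neg hneg]
    · have : ¬ a i < 0 := not_lt.mpr hpos
      rcases Bool.eq_false_or_eq_true (b i) with h2 | h2 <;>
        simp [h2, this, abs_of_nonneg hpos]
  set T : Finset (Fin ℓ → Bool) :=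
    univ.filter (fun b => ∑ i, a i * (if b i then 1 else 0) = y) with hT
  have hset : {b : Fin ℓ → Bool | ∑ i, a i * (if b i then 1 else 0) = y} = ↑T := by
    ext b; simp [hT]
  rw [hset, Set.ncard_coe_finset]
  set 𝒜 : Finset (Finset (Fin ℓ)) := T.image g with hA
  have hcard : T.card = 𝒜.card := (Finset.card_image_of_injective T hginj).symm
  rw [hcard]
  have hanti : IsAntichain (· ⊆ ·) (𝒜 : Set (Finset (Fin ℓ))) := ?_
  · have := IsAntichain.sperner hanti
    simpa using this
  intro S hS Q hQ hne hsub
  simp only [hA, Finset.coe_image, Set.mem_image, mem_coe] at hS hQ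
  obtain ⟨b, hb, rfl⟩ := hS
  obtain ⟨b', hb', rfl⟩ := hQ
  simp only [hT, mem_filter, mem_univ, true_and] at hb hb'
  rw [hsum b] at hb; rw [hsum b'] at hb'
  have heq : ∑ i ∈ g b, |a i| = ∑ i ∈ g b', |a i| := by linarith
  have hssub : g b ⊆ g b' := hsub
  have hne' : g b ≠ g b' := hne
  obtain ⟨i, hi, hni⟩ := Finset.exists_of_ssubset (hssub.ssubset_of_ne hne')
  have hlt : ∑ j ∈ g b, |a j| < ∑ j ∈ g b', |a j| :=
    Finset.sum_lt_sum_of_subset hssub hi hni (abs_pos.mpr (ha i))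
      (fun j _ _ => abs_nonneg _)
  linarith
end

section
/- (Continuous Littlewood–Offord) Let a₁, ..., a_ℓ be real numbers with |aᵢ| ≥ 1 for all i, and let y ∈ ℝ. Then the number of vectors b ∈ {0,1}^ℓ with Σᵢ aᵢbᵢ ∈ (y, y+1) is at most C(ℓ, ⌊ℓ/2⌋). -/
lemma clo_pos (ℓ : ℕ) (a : Fin ℓ → ℝ) (ha : ∀ i, 1 ≤ a i) (y : ℝ) :
    {b : Fin ℓ → Bool | ∑ i, a i * (if b i then 1 else 0) ∈ Set.Ioo y (y + 1)}.ncard ≤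
      Nat.choose ℓ (ℓ / 2) := by
  classical
  set S := {b : Fin ℓ → Bool | ∑ i, a i * (if b i then 1 else 0) ∈ Set.Ioo y (y + 1)}
  set f : (Fin ℓ → Bool) → Finset (Fin ℓ) := fun b => Finset.univ.filter (fun i => b i) with hf
  have hfin : ∀ b, ∑ i, a i * (if b i then (1:ℝ) else 0) = ∑ i ∈ f b, a i := by
    intro b
    rw [hf, Finset.sum_filter]
    congr 1; ext i
    by_cases h : b i <;> simp [h]
  have hinj : Function.Injective f := by
    intro b b' h
    funext i
    have := Finset.ext_iff.mp h i
    simp [hf] at this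
    simpa using this
  have hSfin : S.Finite := Set.toFinite S
  set 𝒜 : Finset (Finset (Fin ℓ)) := hSfin.toFinset.image f with h𝒜
  have hanti : IsAntichain (· ⊆ ·) (𝒜 : Set (Finset (Fin ℓ))) := by
    intro s hs t ht hst hsub
    simp only [h𝒜, Finset.coe_image, Set.mem_image, Finset.mem_coe,
      Set.Finite.mem_toFinset] at hs ht
    obtain ⟨b, hb, rfl⟩ := hs
    obtain ⟨b', hb', rfl⟩ := ht
    have hssub : f b ⊂ f b' := ⟨hsub, fun h => hst (by rw [Finset.Subset.antisymm hsub h])⟩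
    have hdiff : (1:ℝ) ≤ ∑ i ∈ f b' \ f b, a i := by
      obtain ⟨i, hi⟩ := Finset.exists_of_ssubset hssub
      have hmem : i ∈ f b' \ f b := Finset.mem_sdiff.mpr ⟨hi.1, hi.2⟩
      calc (1:ℝ) ≤ a i := ha i
        _ ≤ ∑ i ∈ f b' \ f b, a i := Finset.single_le_sum (fun j _ => le_trans zero_le_one (ha j)) hmem
    have hsum : ∑ i ∈ f b', a i = ∑ i ∈ f b, a i + ∑ i ∈ f b' \ f b, a i := by
      rw [add_comm, Finset.sum_sdiff hsub]
    have h1 := hb.1; have h2 := hb.2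
    have h1' := hb'.1; have h2' := hb'.2
    rw [hfin] at h1 h2 h1' h2'
    linarith
  have hcard : S.ncard = 𝒜.card := by
    rw [Set.ncard_eq_toFinset_card S hSfin, h𝒜, Finset.card_image_of_injective _ hinj]
  rw [hcard]
  have := IsAntichain.sperner hanti
  simpa using this

theorem continuous_littlewood_offord
    (ℓ : ℕ) (a : Fin ℓ → ℝ) (ha : ∀ i, 1 ≤ |a i|) (y : ℝ) :
    {b : Fin ℓ → Bool | ∑ i, a i * (if b i then 1 else 0) ∈ Set.Ioo y (y + 1)}.ncard ≤
      Nat.choose ℓ (ℓ / 2) := by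
  classical
  set c : ℝ := ∑ i ∈ Finset.univ.filter (fun i => a i < 0), a i with hc
  set σ : (Fin ℓ → Bool) → (Fin ℓ → Bool) := fun b i => xor (b i) (decide (a i < 0)) with hσ
  have hσinv : Function.Involutive σ := by
    intro b; funext i; simp [hσ, Bool.xor_assoc]
  have key : ∀ b, ∑ i, a i * (if σ b i then (1:ℝ) else 0)
      = ∑ i, |a i| * (if b i then 1 else 0) + c := by
    intro b
    rw [hc, Finset.sum_filter, ← Finset.sum_add_distrib]
    apply Finset.sum_congr rfl
    intro i _
    by_cases hneg : a i < 0
    · have : |a i| = -a i := abs_of_neg hneg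
      by_cases hb : b i <;> simp [hσ, hb, hneg, this]
    · have : |a i| = a i := abs_of_nonneg (not_lt.mp hneg)
      by_cases hb : b i <;> simp [hσ, hb, hneg, this]
  have hset : {b : Fin ℓ → Bool | ∑ i, a i * (if b i then 1 else 0) ∈ Set.Ioo y (y + 1)}
      = σ '' {b | ∑ i, |a i| * (if b i then 1 else 0) ∈ Set.Ioo (y - c) (y - c + 1)} := by
    ext b
    constructor
    · intro hb
      refine ⟨σ b, ?_, hσinv b⟩
      have := key (σ b)
      rw [hσinv b] at this
      simp only [Set.mem_setOf_eq, Set.mem_Ioo] at hb ⊢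
      constructor <;> linarith [hb.1, hb.2]
    · rintro ⟨b', hb', rfl⟩
      have := key b'
      simp only [Set.mem_setOf_eq, Set.mem_Ioo] at hb' ⊢
      constructor <;> linarith [hb'.1, hb'.2]
  rw [hset, Set.ncard_image_of_injective _ hσinv.injective]
  exact clo_pos ℓ (fun i => |a i|) ha (y - c)
end

section
/- Let T ∈ {0,1}^{m×r} be the matrix whose first m−r rows are zero, whose next r−1 rows form [I_{r−1}, 0_{r−1}], and whose last row is zero. Then aff(T) ∩ {0,1}^m has exactly 2^{r−1} elements, namely all vectors Tλ where λ₁,...,λ_{r−1} ∈ {0,1} and λ_r = 1 − Σ_{k<r} λ_k. -/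
open Matrix

private lemma aux_mulVec_eq (m r : ℕ)
    (T : Matrix (Fin m) (Fin r) ℝ)
    (hT : ∀ i k, T i k = if (i : ℕ) = m - r + (k : ℕ) ∧ (k : ℕ) < r - 1 then 1 else 0)
    (lam lam' : Fin r → ℝ)
    (h : ∀ k : Fin r, (k : ℕ) < r - 1 → lam k = lam' k) :
    T.mulVec lam = T.mulVec lam' := by
  funext i
  simp only [mulVec, dotProduct]
  refine Finset.sum_congr rfl fun k _ => ?_
  rw [hT]
  by_cases hk : (i : ℕ) = m - r + (k : ℕ) ∧ (k : ℕ) < r - 1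
  · simp [hk, h k hk.2]
  · simp [hk]

private lemma aux_mulVec_at (m r : ℕ) (hr : 1 ≤ r) (hmr : r ≤ m)
    (T : Matrix (Fin m) (Fin r) ℝ)
    (hT : ∀ i k, T i k = if (i : ℕ) = m - r + (k : ℕ) ∧ (k : ℕ) < r - 1 then 1 else 0)
    (lam : Fin r → ℝ) (k : Fin r) (hk : (k : ℕ) < r - 1) :
    T.mulVec lam ⟨m - r + (k : ℕ), by omega⟩ = lam k := by
  simp only [mulVec, dotProduct]
  rw [Finset.sum_eq_single k]
  · rw [hT]; simp [hk]
  · intro k' _ hk'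
    rw [hT]
    have : ¬ ((m - r + (k : ℕ)) = m - r + (k' : ℕ) ∧ (k' : ℕ) < r - 1) := by
      rintro ⟨h1, h2⟩
      exact hk' (Fin.ext (by omega))
    simp only [this, if_false, zero_mul]
  · simp

private lemma aux_mulVec_zero (m r : ℕ)
    (T : Matrix (Fin m) (Fin r) ℝ)
    (hT : ∀ i k, T i k = if (i : ℕ) = m - r + (k : ℕ) ∧ (k : ℕ) < r - 1 then 1 else 0)
    (lam : Fin r → ℝ) (i : Fin m)
    (h : ∀ k : Fin r, ¬ ((i : ℕ) = m - r + (k : ℕ) ∧ (k : ℕ) < r - 1)) :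
    T.mulVec lam i = 0 := by
  simp only [mulVec, dotProduct]
  refine Finset.sum_eq_zero fun k _ => ?_
  rw [hT]
  simp [h k]

theorem face_example_attains_bound
    (m r : ℕ) (hr : 1 ≤ r) (hmr : r ≤ m)
    (T : Matrix (Fin m) (Fin r) ℝ)
    (hT : ∀ i k, T i k = if (i : ℕ) = m - r + (k : ℕ) ∧ (k : ℕ) < r - 1 then 1 else 0) :
    {x : Fin m → ℝ | (∃ lam : Fin r → ℝ, ∑ k, lam k = 1 ∧ T.mulVec lam = x) ∧
        ∀ i, x i = 0 ∨ x i = 1}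
      = {x | ∃ lam : Fin r → ℝ,
          (∀ k : Fin r, (k : ℕ) < r - 1 → (lam k = 0 ∨ lam k = 1)) ∧
          lam ⟨r - 1, by omega⟩ =
            1 - ∑ k ∈ Finset.univ.filter (fun k : Fin r => (k : ℕ) < r - 1), lam k ∧
          x = T.mulVec lam} ∧
    {x : Fin m → ℝ | (∃ lam : Fin r → ℝ, ∑ k, lam k = 1 ∧ T.mulVec lam = x) ∧
        ∀ i, x i = 0 ∨ x i = 1}.ncard = 2 ^ (r - 1) := by
  set last : Fin r := ⟨r - 1, by omega⟩ with hlastdef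
  have hlastval : (last : ℕ) = r - 1 := rfl
  -- the set equality
  have hEq : {x : Fin m → ℝ | (∃ lam : Fin r → ℝ, ∑ k, lam k = 1 ∧ T.mulVec lam = x) ∧
        ∀ i, x i = 0 ∨ x i = 1}
      = {x | ∃ lam : Fin r → ℝ,
          (∀ k : Fin r, (k : ℕ) < r - 1 → (lam k = 0 ∨ lam k = 1)) ∧
          lam last =
            1 - ∑ k ∈ Finset.univ.filter (fun k : Fin r => (k : ℕ) < r - 1), lam k ∧
          x = T.mulVec lam} := by
    ext x
    simp only [Set.mem_setOf_eq]
    constructor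
    · rintro ⟨⟨lam, hsum, rfl⟩, h01⟩
      set S := ∑ k ∈ Finset.univ.filter (fun k : Fin r => (k : ℕ) < r - 1), lam k with hS
      refine ⟨Function.update lam last (1 - S), ?_, ?_, ?_⟩
      · intro k hk
        have hkl : k ≠ last := by
          intro h; rw [h] at hk; omega
        rw [Function.update_of_ne hkl]
        have := aux_mulVec_at m r hr hmr T hT lam k hk
        rw [← this]
        exact h01 _
      · rw [Function.update_self]
        congr 1
        refine Finset.sum_congr rfl fun k hk => ?_
        simp only [Finset.mem_filter] at hk
        have hkl : k ≠ last := by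
          intro h; rw [h] at hk; omega
        rw [Function.update_of_ne hkl]
      · refine aux_mulVec_eq m r T hT _ _ fun k hk => ?_
        have hkl : k ≠ last := by
          intro h; rw [h] at hk; omega
        rw [Function.update_of_ne hkl]
    · rintro ⟨lam, h01, hlast, rfl⟩
      refine ⟨⟨lam, ?_, rfl⟩, ?_⟩
      · rw [← Finset.sum_filter_add_sum_filter_not Finset.univ
          (fun k : Fin r => (k : ℕ) < r - 1) lam]
        have : Finset.univ.filter (fun k : Fin r => ¬ (k : ℕ) < r - 1) = {last} := by
          ext k
          simp only [Finset.mem_filter, Finset.mem_univ, true_and, Finset.mem_singleton]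
          constructor
          · intro h
            have := k.isLt
            exact Fin.ext (by omega)
          · intro h; rw [h]; omega
        rw [this, Finset.sum_singleton, hlast]
        ring
      · intro i
        by_cases hi : m - r ≤ (i : ℕ) ∧ (i : ℕ) < m - 1
        · set k : Fin r := ⟨(i : ℕ) - (m - r), by omega⟩ with hk
          have hkv : (k : ℕ) < r - 1 := by
            simp only [hk]; omega
          have hieq : i = ⟨m - r + (k : ℕ), by omega⟩ := by
            apply Fin.ext
            simp only [hk]
            omega
          rw [hieq, aux_mulVec_at m r hr hmr T hT lam k hkv]
          exact h01 k hkv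
        · left
          refine aux_mulVec_zero m r T hT lam i fun k => ?_
          rintro ⟨h1, h2⟩
          omega
  refine ⟨hEq, ?_⟩
  -- cardinality
  set s : (Fin (r - 1) → Bool) → ℝ :=
    fun b => ∑ j : Fin (r - 1), (if b j then (1 : ℝ) else 0) with hs
  set lamOf : (Fin (r - 1) → Bool) → Fin r → ℝ :=
    fun b k => if h : (k : ℕ) < r - 1 then (if b ⟨k, h⟩ then 1 else 0) else 1 - s b
    with hlamOf
  set g : (Fin (r - 1) → Bool) → Fin m → ℝ := fun b => T.mulVec (lamOf b) with hg
  have hfilter_sum : ∀ b, ∑ k ∈ Finset.univ.filter (fun k : Fin r => (k : ℕ) < r - 1),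
      lamOf b k = s b := by
    intro b
    rw [hs]
    refine Finset.sum_bij' (fun k hk => (⟨(k : ℕ), by
        simp only [Finset.mem_filter] at hk; exact hk.2⟩ : Fin (r - 1)))
      (fun j _ => (⟨(j : ℕ), by omega⟩ : Fin r)) ?_ ?_ ?_ ?_ ?_
    · intro k hk; exact Finset.mem_univ _
    · intro j hj
      simp only [Finset.mem_filter, Finset.mem_univ, true_and]
      exact j.isLt
    · intro k hk; exact Fin.ext rfl
    · intro j hj; exact Fin.ext rfl
    · intro k hk
      simp only [Finset.mem_filter] at hk
      rw [hlamOf]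
      simp only [hk.2, dif_pos]
  have hrange : {x : Fin m → ℝ | (∃ lam : Fin r → ℝ, ∑ k, lam k = 1 ∧ T.mulVec lam = x) ∧
        ∀ i, x i = 0 ∨ x i = 1} = Set.range g := by
    rw [hEq]
    ext x
    simp only [Set.mem_setOf_eq, Set.mem_range]
    constructor
    · rintro ⟨lam, h01, hlast, rfl⟩
      refine ⟨fun j => decide (lam ⟨(j : ℕ), by omega⟩ = 1), ?_⟩
      refine aux_mulVec_eq m r T hT _ _ fun k hk => ?_
      rw [hlamOf]
      simp only [hk, dif_pos]
      simp only [Fin.eta]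
      rcases h01 k hk with h | h <;> simp [h]
    · rintro ⟨b, rfl⟩
      refine ⟨lamOf b, ?_, ?_, rfl⟩
      · intro k hk
        rw [hlamOf]
        simp only [hk, dif_pos]
        by_cases hb : b ⟨k, hk⟩ <;> simp [hb]
      · rw [hfilter_sum b, hlamOf]
        have : ¬ ((last : ℕ) < r - 1) := by omega
        simp only [this, dif_neg, not_false_iff]
  have hginj : Function.Injective g := by
    intro b b' hbb
    funext j
    have h1 : g b ⟨m - r + (j : ℕ), by omega⟩ = g b' ⟨m - r + (j : ℕ), by omega⟩ := by
      rw [hbb]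
    set k : Fin r := ⟨(j : ℕ), by omega⟩ with hk
    have hkv : (k : ℕ) < r - 1 := j.isLt
    rw [hg] at h1
    simp only at h1
    rw [aux_mulVec_at m r hr hmr T hT (lamOf b) k hkv,
        aux_mulVec_at m r hr hmr T hT (lamOf b') k hkv] at h1
    rw [hlamOf] at h1
    simp only [hkv, dif_pos] at h1
    by_cases hb : b j <;> by_cases hb' : b' j <;> simp_all
  rw [hrange, ← Nat.card_coe_set_eq, Nat.card_range_of_injective hginj,
      Nat.card_eq_fintype_card]
  simp
end

section
/- Suppose aff(D) ∩ {0,1}^m = {T_{:,1}, ..., T_{:,r}} where T has affinely independent columns (uniqueness condition). If there exist T' ∈ {0,1}^{m×r} and A' ∈ ℝ₊^{r×n} with A'ᵀ𝟙_r = 𝟙_n and D = T'A' with T' having affinely independent columns, then the columns of T' are a permutation of the columns of T. -/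
open Matrix

theorem uniqueness_gives_permutation
    (m n r : ℕ) (D : Matrix (Fin m) (Fin n) ℝ)
    (T : Matrix (Fin m) (Fin r) ℝ) (hTbin : ∀ i k, T i k = 0 ∨ T i k = 1)
    (hTaff : ∀ lam : Fin r → ℝ, ∑ k, lam k = 0 → T.mulVec lam = 0 → lam = 0)
    (huniq : {x : Fin m → ℝ | (∃ θ : Fin n → ℝ, ∑ j, θ j = 1 ∧ D.mulVec θ = x) ∧
        ∀ i, x i = 0 ∨ x i = 1} = {x | ∃ k : Fin r, x = fun i => T i k})
    (T' : Matrix (Fin m) (Fin r) ℝ) (hT'bin : ∀ i k, T' i k = 0 ∨ T' i k = 1)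
    (hT'aff : ∀ lam : Fin r → ℝ, ∑ k, lam k = 0 → T'.mulVec lam = 0 → lam = 0)
    (A' : Matrix (Fin r) (Fin n) ℝ) (hA'nn : ∀ k j, 0 ≤ A' k j)
    (hA'sum : ∀ j, ∑ k, A' k j = 1) (hA'rank : A'.rank = r)
    (hfac : D = T' * A') :
    ∃ σ : Equiv.Perm (Fin r), ∀ k, (fun i => T' i k) = fun i => T i (σ k) := by
  -- A'.mulVecLin is surjective
  have hsurj : Function.Surjective A'.mulVecLin := by
    rw [← LinearMap.range_eq_top]
    apply Submodule.eq_top_of_finrank_eq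
    rw [← Matrix.rank, hA'rank, Module.finrank_fin_fun]
  -- each column of T' is in the LHS set
  have hmem : ∀ k : Fin r, ∃ k' : Fin r, (fun i => T' i k) = fun i => T i k' := by
    intro k
    have : (fun i => T' i k) ∈ {x : Fin m → ℝ | (∃ θ : Fin n → ℝ,
        ∑ j, θ j = 1 ∧ D.mulVec θ = x) ∧ ∀ i, x i = 0 ∨ x i = 1} := by
      constructor
      · obtain ⟨θ, hθ⟩ := hsurj (Pi.single k 1)
        simp only [Matrix.mulVecLin_apply] at hθ
        refine ⟨θ, ?_, ?_⟩
        · have h1 : ∑ l, (A'.mulVec θ) l = ∑ j, θ j := by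
            simp only [Matrix.mulVec, dotProduct]
            rw [Finset.sum_comm]
            simp_rw [← Finset.sum_mul, hA'sum, one_mul]
          have h2 : ∑ l, (A'.mulVec θ) l = 1 := by
            rw [hθ]; simp [Finset.sum_pi_single]
          rw [← h1, h2]
        · rw [hfac, ← Matrix.mulVec_mulVec, hθ]
          ext i
          simp [Matrix.mulVec_single]
      · intro i; exact hT'bin i k
    rw [huniq] at this
    exact this
  choose f hf using hmem
  -- f is injective
  have hinj : Function.Injective f := by
    intro k l hkl
    by_contra hne
    have hcols : (fun i => T' i k) = fun i => T' i l := by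
      rw [hf k, hf l, hkl]
    have hlam := hT'aff (Pi.single k 1 - Pi.single l 1) ?_ ?_
    · have := congrFun hlam k
      simp [Pi.single_apply, hne] at this
    · simp [Finset.sum_sub_distrib, Finset.sum_pi_single]
    · rw [Matrix.mulVec_sub]
      simp only [Matrix.mulVec_single, mul_one]
      ext i
      have := congrFun hcols i
      simp [this]
  exact ⟨Equiv.ofBijective f (Finite.injective_iff_bijective.mp hinj), fun k => hf k⟩
end

section
/- Let T ∈ {0,1}^{m×r} and A ∈ ℝ^{r×n} with Aᵀ𝟙_r = 𝟙_n, and suppose the columns of T are affinely independent and rank(A) = r. Then rank([𝟙_nᵀ; D]) = r where D = TA, and A is the unique solution of the linear system [𝟙_rᵀ; T] X = [𝟙_nᵀ; D]. -/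
open Matrix

theorem stacked_system_unique_solution
    (m n r : ℕ) (T : Matrix (Fin m) (Fin r) ℝ)
    (hTbin : ∀ i k, T i k = 0 ∨ T i k = 1)
    (hTaff : ∀ lam : Fin r → ℝ, ∑ k, lam k = 0 → T.mulVec lam = 0 → lam = 0)
    (A : Matrix (Fin r) (Fin n) ℝ) (hA : ∀ j, ∑ k, A k j = 1) (hrA : A.rank = r) :
    (Matrix.of (Fin.cons (fun _ => (1 : ℝ)) (fun i => (T * A) i)) :
        Matrix (Fin (m + 1)) (Fin n) ℝ).rank = r ∧
    ∀ X : Matrix (Fin r) (Fin n) ℝ,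
      ((Matrix.of (Fin.cons (fun _ => (1 : ℝ)) (fun i => T i)) :
          Matrix (Fin (m + 1)) (Fin r) ℝ) * X =
        Matrix.of (Fin.cons (fun _ => (1 : ℝ)) (fun i => (T * A) i)) ↔ X = A) := by
  set S : Matrix (Fin (m + 1)) (Fin r) ℝ :=
    Matrix.of (Fin.cons (fun _ => (1 : ℝ)) (fun i => T i)) with hS
  -- The stacked matrix [1; T*A] equals S * A
  have hDA : (Matrix.of (Fin.cons (fun _ => (1 : ℝ)) (fun i => (T * A) i)) :
      Matrix (Fin (m + 1)) (Fin n) ℝ) = S * A := by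
    ext i j
    refine Fin.cases ?_ ?_ i
    · simp [hS, Matrix.mul_apply, hA j]
    · intro i
      simp [hS, Matrix.mul_apply]
  -- S has trivial kernel
  have hinj : Function.Injective S.mulVecLin := by
    rw [← LinearMap.ker_eq_bot, LinearMap.ker_eq_bot']
    intro lam hlam
    have h0 : ∀ i, S.mulVec lam i = 0 := fun i => congrFun hlam i
    apply hTaff
    · have := h0 0
      simpa [hS, Matrix.mulVec, dotProduct] using this
    · funext i
      have := h0 i.succ
      simpa [hS, Matrix.mulVec, dotProduct] using this
  -- A has full range
  have hAsurj : LinearMap.range A.mulVecLin = ⊤ := by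
    have : Module.finrank ℝ (LinearMap.range A.mulVecLin) = r := hrA
    exact Submodule.eq_top_of_finrank_eq (by simpa using this)
  constructor
  · rw [hDA]
    have : (S * A).mulVecLin = S.mulVecLin ∘ₗ A.mulVecLin := Matrix.mulVecLin_mul S A
    rw [Matrix.rank, this, LinearMap.range_comp, hAsurj, Submodule.map_top]
    have := LinearMap.finrank_range_of_inj hinj
    simpa using this
  · intro X
    constructor
    · intro hX
      rw [hDA] at hX
      ext k j
      have hcol : S.mulVec (fun k => X k j) = S.mulVec (fun k => A k j) := by
        funext i
        have := congrFun (congrFun hX i) j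
        simpa [Matrix.mul_apply, Matrix.mulVec, dotProduct] using this
      have := hinj hcol
      exact congrFun this k
    · rintro rfl
      exact hDA.symm
end

section
/- Let V ⊆ ℝ^m be an affine subspace of affine dimension d. Then |V ∩ {0,1}^m| ≤ 2^d. -/
open Module Submodule

lemma exists_separating_coords (m : ℕ) (W : Submodule ℝ (Fin m → ℝ)) :
    ∃ t : Finset (Fin m), t.card ≤ Module.finrank ℝ W ∧
      ∀ w ∈ W, (∀ i ∈ t, w i = 0) → w = 0 := by
  classical
  set f : Fin m → Module.Dual ℝ W := fun i => W.subtype.dualMap (LinearMap.proj i) with hf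
  have hspan : span ℝ (Set.range f) = ⊤ := by
    rw [eq_top_iff]
    intro φ _
    obtain ⟨ψ, hψ⟩ := LinearMap.dualMap_surjective_of_injective W.injective_subtype φ
    have hφ : φ = ∑ i, ψ (Pi.single i 1) • f i := by
      ext w
      have : (w : Fin m → ℝ) = ∑ i, Pi.single i ((w : Fin m → ℝ) i) :=
        (Finset.univ_sum_single (w : Fin m → ℝ)).symm
      simp only [← hψ, LinearMap.dualMap_apply, LinearMap.coe_sum, Finset.sum_apply,
        LinearMap.smul_apply, smul_eq_mul, hf, LinearMap.proj_apply, Submodule.coe_subtype]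
      conv_lhs => rw [this]
      rw [map_sum]
      congr 1
      ext i
      have : Pi.single i ((w : Fin m → ℝ) i) = ((w : Fin m → ℝ) i) • (Pi.single i (1 : ℝ) : Fin m → ℝ) := by
        rw [← Pi.single_smul, smul_eq_mul, mul_one]
      rw [this, map_smul, smul_eq_mul]
      ring
    rw [hφ]
    exact Submodule.sum_mem _ fun i _ =>
      Submodule.smul_mem _ _ (Submodule.subset_span ⟨i, rfl⟩)
  obtain ⟨b, hb₁, hb₂, hb₃⟩ := exists_linearIndependent ℝ (Set.range f)
  rw [hspan] at hb₂
  have hfin : b.Finite := by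
    have : Module.Finite ℝ (Module.Dual ℝ W) := inferInstance
    exact hb₃.finite
  have : Fintype b := hfin.fintype
  have hcard : b.toFinset.card = Module.finrank ℝ W := by
    have := finrank_span_set_eq_card hb₃
    rw [hb₂, finrank_top] at this
    rw [← this, Subspace.dual_finrank_eq]
  -- choose indices
  have hchoice : ∀ φ ∈ b, ∃ i, f i = φ := fun φ hφ => hb₁ hφ
  set t : Finset (Fin m) :=
    b.toFinset.attach.image (fun φ => (hchoice φ.1 (Set.mem_toFinset.mp φ.2)).choose) with ht
  refine ⟨t, ?_, ?_⟩
  · calc t.card ≤ b.toFinset.attach.card := Finset.card_image_le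
    _ = b.toFinset.card := Finset.card_attach
    _ = Module.finrank ℝ W := hcard
  · intro w hw hzero
    have hball : ∀ φ ∈ b, φ ⟨w, hw⟩ = 0 := by
      intro φ hφ
      have hmem : (⟨φ, Set.mem_toFinset.mpr hφ⟩ : {x // x ∈ b.toFinset}) ∈ b.toFinset.attach :=
        Finset.mem_attach _ _
      set i := (hchoice φ hφ).choose with hi
      have hit : i ∈ t := Finset.mem_image.mpr ⟨⟨φ, Set.mem_toFinset.mpr hφ⟩, hmem, rfl⟩
      have := (hchoice φ hφ).choose_spec
      rw [← this]
      simpa [hf] using hzero i hit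
    have hall : ∀ φ : Module.Dual ℝ W, φ ⟨w, hw⟩ = 0 := by
      intro φ
      have hφ : φ ∈ span ℝ b := by rw [hb₂]; trivial
      induction hφ using Submodule.span_induction with
      | mem x hx => exact hball x hx
      | zero => simp
      | add x y _ _ hx hy => simp [hx, hy]
      | smul a x _ hx => simp [hx]
    have : (⟨w, hw⟩ : W) = 0 := (Module.forall_dual_apply_eq_zero_iff ℝ _).mp hall
    simpa using congrArg Subtype.val this

theorem affine_subspace_cube_vertices_bound
    (m d : ℕ) (V : AffineSubspace ℝ (Fin m → ℝ))
    (hne : (V : Set (Fin m → ℝ)).Nonempty)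
    (hdim : Module.finrank ℝ V.direction = d) :
    {x : Fin m → ℝ | x ∈ V ∧ ∀ i, x i = 0 ∨ x i = 1}.ncard ≤ 2 ^ d := by
  classical
  obtain ⟨t, htcard, hsep⟩ := exists_separating_coords m V.direction
  set S := {x : Fin m → ℝ | x ∈ V ∧ ∀ i, x i = 0 ∨ x i = 1} with hS
  set F : S → ({i // i ∈ t} → Bool) := fun x i => decide ((x : Fin m → ℝ) i.1 = 1) with hF
  have hinj : Function.Injective F := by
    rintro ⟨x, hxV, hx01⟩ ⟨y, hyV, hy01⟩ hxy
    have hdir : x - y ∈ V.direction := by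
      have := AffineSubspace.vsub_mem_direction hxV hyV
      simpa using this
    have hzero : ∀ i ∈ t, (x - y) i = 0 := by
      intro i hit
      have h1 : decide (x i = 1) = decide (y i = 1) := congrFun hxy ⟨i, hit⟩
      have hx := hx01 i
      have hy := hy01 i
      simp only [Pi.sub_apply]
      rcases hx with hx | hx <;> rcases hy with hy | hy <;>
        simp [hx, hy] at h1 ⊢
    have := hsep _ hdir hzero
    have hxyeq : x = y := by
      have := sub_eq_zero.mp this
      exact this
    simp [hxyeq]
  have hfin : Finite ({i // i ∈ t} → Bool) := inferInstance
  calc S.ncard = Nat.card S := rfl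
    _ ≤ Nat.card ({i // i ∈ t} → Bool) := Nat.card_le_card_of_injective F hinj
    _ = 2 ^ t.card := by
        rw [Nat.card_eq_fintype_card]
        simp [Fintype.card_fun]
    _ ≤ 2 ^ d := Nat.pow_le_pow_right (by norm_num) (hdim ▸ htcard)
end
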